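/- Let $(A_i(t))_{t\ge 0}$, $1\le i\le i_0$, be nondecreasing real-valued processes such that for every $i$, $A_i(0+)\le \varphi$ and all jumps satisfy $A_i(t+)-A_i(t-)\le \varphi$. Suppose $a,b>0$ with $a-b>\varphi$, and suppose that for all $0\le t\le t_0$, if $A_i(t)\le a$ for every $i$ then $A_i(t)\le b$ for every $i$. Then $A_i(t_0)\le a$ for all $1\le i\le i_0$. -/
import Mathlib


open Function Filter Topology Set

theorem escape_little_lemma (i0 : ℕ) (A : Fin i0 → ℝ → ℝ) (φ a b t0 : ℝ)
    (hφ : 0 ≤ φ) (ha : 0 < a) (hb : 0 < b) (hab : φ < a - b) (ht0 : 0 < t0)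
    (hmono : ∀ i, Monotone (A i))
    (hinit : ∀ i, Function.rightLim (A i) 0 ≤ φ)
    (hjump : ∀ i, ∀ t : ℝ, 0 < t →
      Function.rightLim (A i) t - Function.leftLim (A i) t ≤ φ)
    (hstep : ∀ t : ℝ, 0 ≤ t → t ≤ t0 → (∀ i, A i t ≤ a) → ∀ i, A i t ≤ b) :
    ∀ i, A i t0 ≤ a := by
  classical
  set S : Set ℝ := {t | 0 ≤ t ∧ t ≤ t0 ∧ ∀ i, A i t ≤ a} with hSdef
  have h0S : (0:ℝ) ∈ S := by
    refine ⟨le_refl 0, ht0.le, fun i => ?_⟩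
    have h1 := (hmono i).le_rightLim (le_refl (0:ℝ))
    linarith [hinit i]
  have hbdd : BddAbove S := ⟨t0, fun t ht => ht.2.1⟩
  set c := sSup S with hc
  have hc0 : 0 ≤ c := le_csSup hbdd h0S
  have hct0 : c ≤ t0 := csSup_le ⟨0, h0S⟩ fun t ht => ht.2.1
  have hcS : ∀ i, A i c ≤ a := by
    intro i
    rcases eq_or_lt_of_le hc0 with h0 | h0
    · rw [← h0]; exact h0S.2.2 i
    · have hleft : leftLim (A i) c ≤ b := by
        refine le_of_tendsto ((hmono i).tendsto_leftLim c) ?_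
        filter_upwards [self_mem_nhdsWithin] with s hs
        obtain ⟨s', hs'S, hss'⟩ := exists_lt_of_lt_csSup ⟨0, h0S⟩ hs
        exact le_trans ((hmono i) hss'.le) (hstep s' hs'S.1 hs'S.2.1 hs'S.2.2 i)
      have h1 := (hmono i).le_rightLim (le_refl c)
      have h2 := hjump i c h0
      linarith
  rcases eq_or_lt_of_le hct0 with hct | hct
  · intro i; rw [← hct]; exact hcS i
  · exfalso
    have hrl : ∀ i, rightLim (A i) c < a := by
      intro i
      rcases eq_or_lt_of_le hc0 with h0 | h0
      · rw [← h0]; linarith [hinit i]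
      · have hb' := hstep c hc0 hct0 hcS i
        have h2 := hjump i c h0
        have h3 := (hmono i).leftLim_le (le_refl c)
        linarith
    have hev : ∀ᶠ t in 𝓝[>] c, t ∈ S := by
      have h1 : ∀ᶠ t in 𝓝[>] c, ∀ i, A i t < a := by
        rw [eventually_all]
        intro i
        exact ((hmono i).tendsto_rightLim c).eventually_lt_const (hrl i)
      have h2 : ∀ᶠ t in 𝓝[>] c, t ∈ Ioo c t0 := Ioo_mem_nhdsGT_of_mem ⟨le_refl c, hct⟩
      filter_upwards [h1, h2] with t h1t h2t
      exact ⟨le_trans hc0 h2t.1.le, h2t.2.le, fun i => (h1t i).le⟩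
    obtain ⟨t, htS, htc⟩ := (hev.and self_mem_nhdsWithin).exists
    exact absurd (le_csSup hbdd htS) (not_le.2 htc)
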